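/- Among all trees on n ≥ 2 vertices, the path P_n uniquely maximizes the Wiener index, with value C(n+1, 3) = n(n^2-1)/6. -/

import Mathlib

open SimpleGraph Finset

namespace WienerAux

lemma pathGraph_conn {n : ℕ} (i : Fin n) : (SimpleGraph.pathGraph n).Connected := by
  cases n with
  | zero => exact absurd i.2 (by omega)
  | succ m => exact SimpleGraph.pathGraph_connected m

lemma pg_walk_len {n : ℕ} {i j : Fin n} (p : (SimpleGraph.pathGraph n).Walk i j) :
    (i.val - j.val) + (j.val - i.val) ≤ p.length := by
  induction p with
  | nil => omega
  | cons h q ih =>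
    rw [SimpleGraph.pathGraph_adj] at h
    simp only [SimpleGraph.Walk.length_cons]
    omega

lemma pg_dist_le {n : ℕ} : ∀ (k : ℕ) (i j : Fin n), j.val = i.val + k →
    (SimpleGraph.pathGraph n).dist i j ≤ k := by
  intro k
  induction k with
  | zero =>
    intro i j h
    have : i = j := Fin.ext (by omega)
    subst this; simp
  | succ m ih =>
    intro i j h
    have hi1 : i.val + 1 < n := by omega
    set i' : Fin n := ⟨i.val + 1, hi1⟩ with hi'
    have hadj : (SimpleGraph.pathGraph n).Adj i i' := by
      rw [SimpleGraph.pathGraph_adj]; left; rfl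
    have h1 : (SimpleGraph.pathGraph n).dist i i' = 1 :=
      SimpleGraph.dist_eq_one_iff_adj.mpr hadj
    have h2 : (SimpleGraph.pathGraph n).dist i' j ≤ m := ih i' j (by simp [hi'] ; omega)
    calc (SimpleGraph.pathGraph n).dist i j
        ≤ _ + _ := (pathGraph_conn i).dist_triangle (v := i')
      _ ≤ m + 1 := by omega

lemma pg_dist {n : ℕ} (i j : Fin n) :
    (SimpleGraph.pathGraph n).dist i j = (i.val - j.val) + (j.val - i.val) := by
  refine le_antisymm ?_ ?_
  · rcases le_total i.val j.val with h | h
    · have := pg_dist_le (j.val - i.val) i j (by omega)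
      omega
    · have := pg_dist_le (i.val - j.val) j i (by omega)
      rw [SimpleGraph.dist_comm]
      omega
  · obtain ⟨p, hp⟩ := ((pathGraph_conn i).1 i j).exists_walk_length_eq_dist
    have := pg_walk_len p
    omega

lemma sum_succ_choose (n : ℕ) : ∑ i ∈ range n, (i + 1) = (n + 1).choose 2 := by
  induction n with
  | zero => decide
  | succ m ih =>
    rw [Finset.sum_range_succ, ih]
    simp [Nat.choose_succ_succ (m+1) 1, Nat.choose_one_right]
    omega

lemma range_absdiff_sum (n : ℕ) :
    ∑ i ∈ range n, ∑ j ∈ range n, ((i - j) + (j - i)) = 2 * (n + 1).choose 3 := by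
  induction n with
  | zero => decide
  | succ m ih =>
    have inner : ∀ i ∈ range m, ∑ j ∈ range (m+1), ((i - j) + (j - i))
        = (∑ j ∈ range m, ((i - j) + (j - i))) + (m - i) := by
      intro i hi
      rw [Finset.sum_range_succ]
      have : i ∈ range m := hi
      have him : i < m := Finset.mem_range.mp hi
      omega
    rw [Finset.sum_range_succ, Finset.sum_congr rfl inner, Finset.sum_add_distrib, ih]
    have last : ∑ j ∈ range (m+1), ((m - j) + (j - m)) = ∑ j ∈ range m, (m - j) := by
      rw [Finset.sum_range_succ]
      refine (by omega : ∀ a b : ℕ, a = b → a + (m - m + (m - m)) = b) _ _ ?_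
      exact Finset.sum_congr rfl fun j hj => by have := Finset.mem_range.mp hj; omega
    rw [last]
    have hrefl : ∑ j ∈ range m, (m - j) = ∑ j ∈ range m, (j + 1) := by
      rw [← Finset.sum_range_reflect]
      exact Finset.sum_congr rfl fun j hj => by have := Finset.mem_range.mp hj; omega
    rw [hrefl, sum_succ_choose]
    have h3 : (m + 1 + 1).choose 3 = (m + 1).choose 2 + (m + 1).choose 3 :=
      Nat.choose_succ_succ (m + 1) 2
    omega

lemma path_sum (n : ℕ) :
    ∑ u : Fin n, ∑ v : Fin n, (SimpleGraph.pathGraph n).dist u v = 2 * (n + 1).choose 3 := by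
  have h : ∀ u : Fin n, ∑ v : Fin n, (SimpleGraph.pathGraph n).dist u v
      = ∑ j ∈ range n, ((u.val - j) + (j - u.val)) := by
    intro u
    rw [← Fin.sum_univ_eq_sum_range]
    exact Finset.sum_congr rfl fun v _ => pg_dist u v
  rw [Finset.sum_congr rfl (fun u _ => h u), Fin.sum_univ_eq_sum_range
    (fun i => ∑ j ∈ range n, ((i - j) + (j - i))), range_absdiff_sum]



variable {V : Type} {G : SimpleGraph V}

/-- splitting a walk at index k -/
lemma exists_split {u v : V} (p : G.Walk u v) :
    ∀ k, k ≤ p.length → ∃ q : G.Walk u (p.getVert k), ∃ r : G.Walk (p.getVert k) v,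
      q.length = k ∧ r.length = p.length - k := by
  induction p with
  | nil =>
    intro k hk
    have hk0 : k = 0 := by simpa using hk
    subst hk0
    exact ⟨.nil, .nil, rfl, rfl⟩
  | @cons a b c h q ih =>
    intro k hk
    match k with
    | 0 => exact ⟨.nil, .cons h q, rfl, rfl⟩
    | k + 1 =>
      obtain ⟨q', r', hq', hr'⟩ := ih k (by simpa using hk)
      exact ⟨.cons h q', r', by simp [hq'], by simpa using hr'⟩

lemma dist_getVert (hc : G.Connected) {u v : V} (p : G.Walk u v)
    (hp : p.length = G.dist u v) {k : ℕ} (hk : k ≤ p.length) :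
    G.dist u (p.getVert k) = k := by
  obtain ⟨q, r, hq, hr⟩ := exists_split p k hk
  have h1 := SimpleGraph.dist_le q
  have h2 := SimpleGraph.dist_le r
  have h3 := hc.dist_triangle (u := u) (v := p.getVert k) (w := v)
  omega

/-- distances from a fixed vertex are downward closed -/
lemma dist_downward (hc : G.Connected) (ℓ : V) {v : V} {k : ℕ}
    (hk : k < G.dist ℓ v) : ∃ u : V, G.dist ℓ u = k := by
  obtain ⟨p, hp⟩ := (hc.1 ℓ v).exists_walk_length_eq_dist
  exact ⟨p.getVert k, dist_getVert hc p hp (by omega)⟩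

section Comb
variable {α : Type} [DecidableEq α]

/-- The key counting lemma. -/
lemma comb_lemma (f : α → ℕ) (s : Finset α)
    (hdc : ∀ v ∈ s, ∀ k < f v, ∃ u ∈ s, f u = k) :
    (∑ v ∈ s, f v ≤ s.card.choose 2) ∧
      (¬ Set.InjOn f s → ∑ v ∈ s, f v + 1 ≤ s.card.choose 2) := by
  classical
  induction s using Finset.strongInduction with
  | _ s ih =>
  rcases s.eq_empty_or_nonempty with rfl | hne
  · simp [Set.injOn_empty]
  obtain ⟨u₀, hu₀, hmax⟩ := s.exists_max_image f hne
  set M := f u₀ with hM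
  set g : ℕ → α := fun k => if h : ∃ u ∈ s, f u = k then h.choose else u₀ with hg
  have hgs : ∀ k, k ≤ M → g k ∈ s ∧ f (g k) = k := by
    intro k hk
    have hex : ∃ u ∈ s, f u = k := by
      rcases eq_or_lt_of_le hk with rfl | hlt
      · exact ⟨u₀, hu₀, rfl⟩
      · exact hdc u₀ hu₀ k hlt
    simp only [hg, dif_pos hex]
    exact ⟨hex.choose_spec.1, hex.choose_spec.2⟩
  have hMcard : M + 1 ≤ s.card := by
    have : (range (M + 1)).card ≤ s.card := by
      apply Finset.card_le_card_of_injOn g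
      · intro k hk; exact (hgs k (by simpa using Nat.lt_succ_iff.mp (mem_range.mp hk))).1
      · intro a ha b hb hab
        have h1 := (hgs a (Nat.lt_succ_iff.mp (mem_range.mp ha))).2
        have h2 := (hgs b (Nat.lt_succ_iff.mp (mem_range.mp hb))).2
        rw [← h1, ← h2, hab]
    simpa using this
  set s' := s.erase u₀ with hs'
  have hcard' : s'.card + 1 = s.card := by
    rw [hs', Finset.card_erase_of_mem hu₀]
    have := Finset.card_pos.mpr hne
    omega
  have hdc' : ∀ v ∈ s', ∀ k < f v, ∃ u ∈ s', f u = k := by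
    intro v hv k hk
    obtain ⟨u, hu, hfu⟩ := hdc v (Finset.mem_of_mem_erase hv) k hk
    refine ⟨u, Finset.mem_erase.mpr ⟨?_, hu⟩, hfu⟩
    rintro rfl
    have := hmax v (Finset.mem_of_mem_erase hv)
    omega
  have hsum : ∑ v ∈ s, f v = f u₀ + ∑ v ∈ s', f v := by
    rw [hs', Finset.add_sum_erase _ _ hu₀]
  have IH := ih s' (Finset.erase_ssubset hu₀) hdc'
  have hchoose : s.card.choose 2 = s'.card + s'.card.choose 2 := by
    rw [← hcard', Nat.choose_succ_succ s'.card 1, Nat.choose_one_right]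
  constructor
  · omega
  · intro hninj
    by_cases hinj' : Set.InjOn f s'
    · -- duplicate must involve u₀
      have hdup : ∃ v ∈ s', f v = M := by
        rw [Set.InjOn] at hninj
        push_neg at hninj
        obtain ⟨a, ha, b, hb, hab, hne'⟩ := hninj
        simp only [Finset.coe_mem, Finset.mem_coe] at ha hb
        rcases eq_or_ne a u₀ with rfl | ha0
        · exact ⟨b, Finset.mem_erase.mpr ⟨fun h => hne' h.symm, hb⟩, hab.symm⟩
        · rcases eq_or_ne b u₀ with rfl | hb0
          · exact ⟨a, Finset.mem_erase.mpr ⟨ha0, ha⟩, hab⟩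
          · exact absurd (hinj' (Finset.mem_erase.mpr ⟨ha0, ha⟩)
              (Finset.mem_erase.mpr ⟨hb0, hb⟩) hab) hne'
      obtain ⟨v, hv, hfv⟩ := hdup
      -- now M + 2 ≤ s.card
      have hM2 : M + 2 ≤ s.card := by
        have : (range (M + 1)).card ≤ (s.erase v).card := by
          apply Finset.card_le_card_of_injOn (fun k => if k = M then u₀ else g k)
          · intro k hk
            have hk' := Nat.lt_succ_iff.mp (mem_range.mp hk)
            by_cases h : k = M
            · simp only [h, if_pos rfl]
              exact Finset.mem_erase.mpr ⟨fun h' => (Finset.mem_erase.mp hv).1 h'.symm, hu₀⟩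
            · simp only [if_neg h]
              refine Finset.mem_erase.mpr ⟨?_, (hgs k hk').1⟩
              intro h'
              have := (hgs k hk').2
              rw [h'] at this
              omega
          · intro a ha b hb hab
            have ha' := Nat.lt_succ_iff.mp (mem_range.mp ha)
            have hb' := Nat.lt_succ_iff.mp (mem_range.mp hb)
            have key : ∀ k ≤ M, f (if k = M then u₀ else g k) = k := by
              intro k hk
              by_cases h : k = M
              · simp [h, hM]
              · simp only [if_neg h]; exact (hgs k hk).2
            have h1 := key a ha'
            have h2 := key b hb'
            have hab' : (if a = M then u₀ else g a) = (if b = M then u₀ else g b) := hab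
            rw [hab'] at h1
            omega
        have h5 := Finset.card_erase_of_mem (Finset.mem_of_mem_erase hv)
        have hpos := Finset.card_pos.mpr hne
        simp only [Finset.card_range] at this
        omega
      omega
    · have := IH.2 hinj'
      omega

end Comb


end WienerAux


namespace WienerAux2

variable {V : Type} [Fintype V] [DecidableEq V] {T : SimpleGraph V}

lemma exists_leaf (hT : T.IsTree) (h2 : 2 ≤ Fintype.card V) :
    ∃ ℓ : V, ∃ w : V, T.Adj ℓ w ∧ ∀ a, T.Adj ℓ a → a = w := by
  classical
  letI : DecidableRel T.Adj := Classical.decRel _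
  have hedge : T.edgeFinset.card + 1 = Fintype.card V := hT.card_edgeFinset
  have hdegsum : ∑ v : V, T.degree v = 2 * T.edgeFinset.card :=
    T.sum_degrees_eq_twice_card_edges
  have hdegpos : ∀ v : V, 0 < T.degree v := by
    intro v
    rw [T.degree_pos_iff_exists_adj]
    obtain ⟨u, hu⟩ := Fintype.exists_ne_of_one_lt_card h2 v
    obtain ⟨p⟩ := hT.isConnected.1 v u
    have hnil : ¬ p.Nil := SimpleGraph.Walk.not_nil_of_ne (Ne.symm hu)
    exact ⟨_, p.adj_snd hnil⟩
  by_contra hno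
  push_neg at hno
  have hdeg2 : ∀ v : V, 2 ≤ T.degree v := by
    intro v
    rcases Nat.lt_or_ge (T.degree v) 2 with h | h
    · exfalso
      have h1 : T.degree v = 1 := by have := hdegpos v; omega
      have hcard : (T.neighborFinset v).card = 1 := by
        rwa [T.card_neighborFinset_eq_degree]
      obtain ⟨w, hw⟩ := Finset.card_eq_one.mp hcard
      have hadjvw : T.Adj v w := by
        rw [← SimpleGraph.mem_neighborFinset, hw]; exact Finset.mem_singleton_self w
      obtain ⟨a, ha, hane⟩ := hno v w hadjvw
      apply hane
      have : a ∈ T.neighborFinset v := (SimpleGraph.mem_neighborFinset _ _ _).mpr ha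
      rw [hw] at this
      exact Finset.mem_singleton.mp this
    · exact h
  have : (Finset.univ : Finset V).card • 2 ≤ ∑ v : V, T.degree v :=
    Finset.card_nsmul_le_sum _ _ _ (fun v _ => hdeg2 v)
  simp only [Finset.card_univ, smul_eq_mul] at this
  omega

lemma path_avoids_leaf {ℓ w : V} (huniq : ∀ a, T.Adj ℓ a → a = w) :
    ∀ {u v : V} (p : T.Walk u v), p.IsPath → u ≠ ℓ → v ≠ ℓ → ℓ ∉ p.support := by
  intro u v p
  induction p with
  | nil =>
    intro _ hu _
    simp [Ne.symm hu]
  | @cons a x c h q ih =>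
    intro hp hu hv
    rcases eq_or_ne x ℓ with rfl | hx
    · exfalso
      cases q with
      | nil => exact hv rfl
      | @cons _ y _ h2 q2 =>
        have hy : y = w := huniq y h2
        have ha : a = w := huniq a h.symm
        have hnd := hp.support_nodup
        simp only [SimpleGraph.Walk.support_cons, List.nodup_cons] at hnd
        exact hnd.1 (by rw [ha, ← hy]; simp)
    · simp only [SimpleGraph.Walk.support_cons, List.mem_cons]
      push_neg
      exact ⟨Ne.symm hu, ih hp.of_cons hx hv⟩

/-- lift a walk avoiding nothing outside s into the induced subgraph -/
lemma walk_lift (s : Set V) {u v : V} (p : T.Walk u v)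
    (hs : ∀ x ∈ p.support, x ∈ s) (hu : u ∈ s) (hv : v ∈ s) :
    ∃ q : (T.induce s).Walk ⟨u, hu⟩ ⟨v, hv⟩, q.length = p.length := by
  induction p with
  | nil => exact ⟨.nil, rfl⟩
  | @cons a x c h q ih =>
    have hx : x ∈ s := hs x (by simp)
    obtain ⟨q', hq'⟩ := ih (fun y hy => hs y (by simp [hy])) hx hv
    have hadj : (T.induce s).Adj ⟨a, hu⟩ ⟨x, hx⟩ := h
    exact ⟨.cons hadj q', by simp [hq']⟩

end WienerAux2

namespace Part2
open WienerAux WienerAux2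

variable {V : Type} [Fintype V] [DecidableEq V] {T : SimpleGraph V}

lemma induce_connected (hT : T.IsTree) {ℓ w : V} (hadj : T.Adj ℓ w)
    (huniq : ∀ a, T.Adj ℓ a → a = w) :
    (T.induce {x | x ≠ ℓ}).Connected := by
  have hne : Nonempty ↥({x : V | x ≠ ℓ}) := ⟨⟨w, hadj.ne'⟩⟩
  refine SimpleGraph.Connected.mk ?_
  rintro ⟨a, ha⟩ ⟨b, hb⟩
  obtain ⟨p, hp⟩ := hT.existsUnique_path a b
  have havoid := path_avoids_leaf huniq p hp.1 ha hb
  obtain ⟨q, _⟩ := walk_lift {x | x ≠ ℓ} p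
    (fun x hx => by rintro rfl; exact havoid hx) ha hb
  exact q.reachable

lemma induce_isTree (hT : T.IsTree) {ℓ w : V} (hadj : T.Adj ℓ w)
    (huniq : ∀ a, T.Adj ℓ a → a = w) :
    (T.induce {x | x ≠ ℓ}).IsTree := by
  constructor
  · exact induce_connected hT hadj huniq
  · intro x c hc
    have hinj : Function.Injective (SimpleGraph.Embedding.induce (G := T) {x | x ≠ ℓ}).toHom :=
      Subtype.val_injective
    exact hT.IsAcyclic _ (hc.map hinj)

lemma dist_induce (hT : T.IsTree) {ℓ w : V} (hadj : T.Adj ℓ w)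
    (huniq : ∀ a, T.Adj ℓ a → a = w) (u v : ({x | x ≠ ℓ} : Set V)) :
    (T.induce {x | x ≠ ℓ}).dist u v = T.dist u.val v.val := by
  refine le_antisymm ?_ ?_
  · obtain ⟨p, hp, hlen⟩ := hT.isConnected.exists_path_of_dist u.val v.val
    have havoid := path_avoids_leaf huniq p hp u.2 v.2
    obtain ⟨q, hq⟩ := walk_lift {x | x ≠ ℓ} p
      (fun x hx => by rintro rfl; exact havoid hx) u.2 v.2
    calc (T.induce {x | x ≠ ℓ}).dist u v ≤ q.length := SimpleGraph.dist_le q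
      _ = T.dist u.val v.val := by rw [hq, hlen]
  · obtain ⟨r, hr⟩ := ((induce_connected hT hadj huniq).1 u v).exists_walk_length_eq_dist
    calc T.dist u.val v.val
        ≤ (r.map (SimpleGraph.Embedding.induce (G := T) {x | x ≠ ℓ}).toHom).length :=
          SimpleGraph.dist_le _
      _ = (T.induce {x | x ≠ ℓ}).dist u v := by rw [SimpleGraph.Walk.length_map, hr]

lemma M1 : ∀ (n : ℕ) (V : Type) [Fintype V] [DecidableEq V] (T : SimpleGraph V),
    T.IsTree → Fintype.card V = n →
    (∑ u : V, ∑ v : V, T.dist u v) ≤ 2 * (n + 1).choose 3 := by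
  intro n
  induction n with
  | zero =>
    intro V _ _ T hT hcard
    have : IsEmpty V := Fintype.card_eq_zero_iff.mp hcard
    simp
  | succ n ih =>
    intro V _ _ T hT hcard
    rcases Nat.eq_zero_or_pos n with rfl | hn
    · have hone := Fintype.card_eq_one_iff.mp hcard
      obtain ⟨x, hx⟩ := hone
      have : ∀ u v : V, T.dist u v = 0 := by
        intro u v
        rw [(hx u).trans (hx v).symm]
        exact SimpleGraph.dist_self
      simp [this]
    · obtain ⟨ℓ, w, hadj, huniq⟩ := exists_leaf hT (by omega)
      set s : Set V := {x | x ≠ ℓ} with hs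
      letI : DecidablePred (· ∈ s) := Classical.decPred _
      have hcs : Fintype.card ↥s = n := by
        have h1 : Fintype.card ↥s = Fintype.card {x : V // ¬ (x = ℓ)} :=
          Fintype.card_congr (Equiv.subtypeEquivRight (fun x => Iff.rfl))
        rw [h1, Fintype.card_subtype_compl, Fintype.card_subtype_eq, hcard]
        omega
      -- decomposition
      have hmem : ∀ x : V, x ∈ Finset.univ.erase ℓ ↔ x ∈ s := by
        intro x; simp [hs]
      have step1 : (∑ u ∈ Finset.univ.erase ℓ, ∑ v : V, T.dist u v) + (∑ v : V, T.dist ℓ v)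
          = ∑ u : V, ∑ v : V, T.dist u v :=
        Finset.sum_erase_add _ _ (Finset.mem_univ ℓ)
      have step2 : ∀ u : V, (∑ v ∈ Finset.univ.erase ℓ, T.dist u v) + T.dist u ℓ
          = ∑ v : V, T.dist u v := fun u =>
        Finset.sum_erase_add _ _ (Finset.mem_univ ℓ)
      have hcomm : ∑ u ∈ Finset.univ.erase ℓ, T.dist u ℓ = ∑ u ∈ Finset.univ.erase ℓ, T.dist ℓ u :=
        Finset.sum_congr rfl (fun u _ => SimpleGraph.dist_comm)
      have hDfull : (∑ v ∈ Finset.univ.erase ℓ, T.dist ℓ v) + T.dist ℓ ℓ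
          = ∑ v : V, T.dist ℓ v := Finset.sum_erase_add _ _ (Finset.mem_univ ℓ)
      have hself : T.dist ℓ ℓ = 0 := SimpleGraph.dist_self
      -- D bound
      have hcomb := (comb_lemma (T.dist ℓ) Finset.univ
        (fun v _ k hk => by
          obtain ⟨u, hu⟩ := dist_downward hT.isConnected ℓ hk
          exact ⟨u, Finset.mem_univ u, hu⟩)).1
      rw [Finset.card_univ, hcard] at hcomb
      -- S' bound via IH
      have hsub : ∑ u ∈ Finset.univ.erase ℓ, ∑ v ∈ Finset.univ.erase ℓ, T.dist u v
          = ∑ u : ↥s, ∑ v : ↥s, (T.induce s).dist u v := by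
        rw [Finset.sum_subtype _ hmem (fun u => ∑ v ∈ Finset.univ.erase ℓ, T.dist u v)]
        refine Finset.sum_congr rfl (fun u _ => ?_)
        rw [Finset.sum_subtype _ hmem (fun v => T.dist u.val v)]
        exact Finset.sum_congr rfl (fun v _ => (dist_induce hT hadj huniq u v).symm)
      have hS' : ∑ u : ↥s, ∑ v : ↥s, (T.induce s).dist u v ≤ 2 * (n + 1).choose 3 :=
        ih ↥s (T.induce s) (induce_isTree hT hadj huniq) hcs
      have hsplit : ∑ u : V, ∑ v : V, T.dist u v
          = (∑ u ∈ Finset.univ.erase ℓ, ∑ v ∈ Finset.univ.erase ℓ, T.dist u v)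
            + (∑ u ∈ Finset.univ.erase ℓ, T.dist u ℓ) + (∑ v : V, T.dist ℓ v) := by
        rw [← step1]
        congr 1
        rw [← Finset.sum_add_distrib]
        exact Finset.sum_congr rfl (fun u _ => (step2 u).symm)
      rw [hsplit, hsub, hcomm]
      have h3 : (n + 1 + 1).choose 3 = (n + 1).choose 2 + (n + 1).choose 3 :=
        Nat.choose_succ_succ (n + 1) 2
      omega

variable {V : Type} [Fintype V] [DecidableEq V] {T : SimpleGraph V}

lemma bound_of_downward (f : V → ℕ) (hdc : ∀ v : V, ∀ k < f v, ∃ u, f u = k) (v : V) :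
    f v < Fintype.card V := by
  classical
  set g : ℕ → V := fun k => if h : ∃ u, f u = k then h.choose else v with hg
  have hgs : ∀ k ≤ f v, f (g k) = k := by
    intro k hk
    have hex : ∃ u, f u = k := by
      rcases eq_or_lt_of_le hk with rfl | hlt
      · exact ⟨v, rfl⟩
      · exact hdc v k hlt
    simp only [hg, dif_pos hex]
    exact hex.choose_spec
  have : (Finset.range (f v + 1)).card ≤ (Finset.univ : Finset V).card := by
    apply Finset.card_le_card_of_injOn g (fun k _ => Finset.mem_univ _)
    intro a ha b hb hab
    have h1 := hgs a (Nat.lt_succ_iff.mp (Finset.mem_range.mp ha))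
    have h2 := hgs b (Nat.lt_succ_iff.mp (Finset.mem_range.mp hb))
    rw [← h1, ← h2, hab]
  simpa using this

lemma adj_of_dist_succ (hT : T.IsTree) {ℓ : V}
    (hinj : Function.Injective (T.dist ℓ)) {u v : V}
    (h : T.dist ℓ v = T.dist ℓ u + 1) : T.Adj u v := by
  obtain ⟨p, hp⟩ := (hT.isConnected.1 ℓ v).exists_walk_length_eq_dist
  have hlt : T.dist ℓ u < p.length := by omega
  have hadj := p.adj_getVert_succ hlt
  have hx : T.dist ℓ (p.getVert (T.dist ℓ u)) = T.dist ℓ u :=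
    WienerAux.dist_getVert hT.isConnected p hp (by omega)
  have hxu : p.getVert (T.dist ℓ u) = u := hinj hx
  have hv : p.getVert (T.dist ℓ u + 1) = v := by
    have : T.dist ℓ u + 1 = p.length := by omega
    rw [this]
    exact p.getVert_length
  rwa [hxu, hv] at hadj

lemma iso_of_inj (hT : T.IsTree) {n : ℕ} (hcard : Fintype.card V = n) {ℓ : V}
    (hinj : Function.Injective (T.dist ℓ)) :
    Nonempty (T ≃g SimpleGraph.pathGraph n) := by
  have hdc : ∀ v : V, ∀ k < T.dist ℓ v, ∃ u, T.dist ℓ u = k := fun v k hk =>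
    WienerAux.dist_downward hT.isConnected ℓ hk
  have hbd : ∀ v : V, T.dist ℓ v < n := fun v => hcard ▸ bound_of_downward _ hdc v
  set F : V → Fin n := fun v => ⟨T.dist ℓ v, hbd v⟩ with hF
  have hFinj : Function.Injective F := by
    intro a b hab
    exact hinj (congrArg Fin.val hab)
  have hbij : Function.Bijective F :=
    (Fintype.bijective_iff_injective_and_card F).mpr
      ⟨hFinj, by rw [Fintype.card_fin, hcard]⟩
  set e : V ≃ Fin n := Equiv.ofBijective F hbij with he
  refine ⟨{ toEquiv := e, map_rel_iff' := ?_ }⟩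
  intro u v
  simp only [he, Equiv.ofBijective_apply, SimpleGraph.pathGraph_adj, hF]
  constructor
  · rintro (h | h)
    · exact adj_of_dist_succ hT hinj h.symm
    · exact (adj_of_dist_succ hT hinj h.symm).symm
  · intro hA
    have h1 : T.dist u v = 1 := SimpleGraph.dist_eq_one_iff_adj.mpr hA
    have t1 := hT.isConnected.dist_triangle (u := ℓ) (v := u) (w := v)
    have t2 := hT.isConnected.dist_triangle (u := ℓ) (v := v) (w := u)
    have h2 : T.dist v u = 1 := SimpleGraph.dist_eq_one_iff_adj.mpr hA.symm
    have hne : T.dist ℓ u ≠ T.dist ℓ v := fun h => hA.ne (hinj h)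
    omega


lemma M2 (n : ℕ) (hn : 2 ≤ n) (T : SimpleGraph V) (hT : T.IsTree)
    (hcard : Fintype.card V = n)
    (heq : ∑ u : V, ∑ v : V, T.dist u v = 2 * (n + 1).choose 3) :
    Nonempty (T ≃g SimpleGraph.pathGraph n) := by
  obtain ⟨ℓ, w, hadj, huniq⟩ := exists_leaf hT (by omega)
  set s : Set V := {x | x ≠ ℓ} with hs
  letI : DecidablePred (· ∈ s) := Classical.decPred _
  have hcs : Fintype.card ↥s = n - 1 := by
    have h1 : Fintype.card ↥s = Fintype.card {x : V // ¬ (x = ℓ)} :=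
      Fintype.card_congr (Equiv.subtypeEquivRight (fun x => Iff.rfl))
    rw [h1, Fintype.card_subtype_compl, Fintype.card_subtype_eq, hcard]
  have hmem : ∀ x : V, x ∈ Finset.univ.erase ℓ ↔ x ∈ s := by
    intro x; simp [hs]
  have step1 : (∑ u ∈ Finset.univ.erase ℓ, ∑ v : V, T.dist u v) + (∑ v : V, T.dist ℓ v)
      = ∑ u : V, ∑ v : V, T.dist u v :=
    Finset.sum_erase_add _ _ (Finset.mem_univ ℓ)
  have step2 : ∀ u : V, (∑ v ∈ Finset.univ.erase ℓ, T.dist u v) + T.dist u ℓ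
      = ∑ v : V, T.dist u v := fun u =>
    Finset.sum_erase_add _ _ (Finset.mem_univ ℓ)
  have hcomm : ∑ u ∈ Finset.univ.erase ℓ, T.dist u ℓ = ∑ u ∈ Finset.univ.erase ℓ, T.dist ℓ u :=
    Finset.sum_congr rfl (fun u _ => SimpleGraph.dist_comm)
  have hDfull : (∑ v ∈ Finset.univ.erase ℓ, T.dist ℓ v) + T.dist ℓ ℓ
      = ∑ v : V, T.dist ℓ v := Finset.sum_erase_add _ _ (Finset.mem_univ ℓ)
  have hself : T.dist ℓ ℓ = 0 := SimpleGraph.dist_self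
  have hdc : ∀ v ∈ (Finset.univ : Finset V), ∀ k < T.dist ℓ v,
      ∃ u ∈ (Finset.univ : Finset V), T.dist ℓ u = k := fun v _ k hk => by
    obtain ⟨u, hu⟩ := dist_downward hT.isConnected ℓ hk
    exact ⟨u, Finset.mem_univ u, hu⟩
  have hcomb := comb_lemma (T.dist ℓ) Finset.univ hdc
  rw [Finset.card_univ, hcard] at hcomb
  have hsub : ∑ u ∈ Finset.univ.erase ℓ, ∑ v ∈ Finset.univ.erase ℓ, T.dist u v
      = ∑ u : ↥s, ∑ v : ↥s, (T.induce s).dist u v := by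
    rw [Finset.sum_subtype _ hmem (fun u => ∑ v ∈ Finset.univ.erase ℓ, T.dist u v)]
    refine Finset.sum_congr rfl (fun u _ => ?_)
    rw [Finset.sum_subtype _ hmem (fun v => T.dist u.val v)]
    exact Finset.sum_congr rfl (fun v _ => (dist_induce hT hadj huniq u v).symm)
  have hS' : ∑ u : ↥s, ∑ v : ↥s, (T.induce s).dist u v ≤ 2 * (n - 1 + 1).choose 3 :=
    M1 (n - 1) ↥s (T.induce s) (induce_isTree hT hadj huniq) hcs
  have hn1 : n - 1 + 1 = n := by omega
  rw [hn1] at hS'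
  have hsplit : ∑ u : V, ∑ v : V, T.dist u v
      = (∑ u ∈ Finset.univ.erase ℓ, ∑ v ∈ Finset.univ.erase ℓ, T.dist u v)
        + (∑ u ∈ Finset.univ.erase ℓ, T.dist u ℓ) + (∑ v : V, T.dist ℓ v) := by
    rw [← step1]
    congr 1
    rw [← Finset.sum_add_distrib]
    exact Finset.sum_congr rfl (fun u _ => (step2 u).symm)
  have h3 : (n + 1).choose 3 = n.choose 2 + n.choose 3 := Nat.choose_succ_succ n 2
  have hinjOn : Set.InjOn (T.dist ℓ) ↑(Finset.univ : Finset V) := by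
    by_contra hninj
    have hstrict := hcomb.2 hninj
    rw [hsplit, hsub, hcomm] at heq
    omega
  have hinj : Function.Injective (T.dist ℓ) := fun a b h =>
    hinjOn (Finset.mem_coe.mpr (Finset.mem_univ a)) (Finset.mem_coe.mpr (Finset.mem_univ b)) h
  exact iso_of_inj hT hcard hinj

end Part2

/-- The Wiener index of a finite graph. -/
noncomputable def wiener {V : Type*} [Fintype V] (G : SimpleGraph V) : ℕ :=
  (∑ u : V, ∑ v : V, G.dist u v) / 2

/-- Among all trees on `n ≥ 2` vertices, the path `P_n` uniquely maximizes
the Wiener index, with value `C(n+1,3) = n(n²-1)/6`. -/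
theorem path_unique_max_wiener (n : ℕ) (hn : 2 ≤ n)
    (T : SimpleGraph (Fin n)) (hT : T.IsTree) :
    wiener (SimpleGraph.pathGraph n) = (n + 1).choose 3 ∧
    wiener T ≤ wiener (SimpleGraph.pathGraph n) ∧
    (wiener T = wiener (SimpleGraph.pathGraph n) →
      Nonempty (T ≃g SimpleGraph.pathGraph n)) := by
  have hP : wiener (SimpleGraph.pathGraph n) = (n + 1).choose 3 := by
    rw [wiener, WienerAux.path_sum n]
    exact Nat.mul_div_cancel_left _ (by norm_num)
  have hM1 := Part2.M1 n (Fin n) T hT (Fintype.card_fin n)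
  have hTle : wiener T ≤ wiener (SimpleGraph.pathGraph n) := by
    rw [hP, wiener]
    calc (∑ u : Fin n, ∑ v : Fin n, T.dist u v) / 2 ≤ 2 * (n + 1).choose 3 / 2 :=
      Nat.div_le_div_right hM1
    _ = (n + 1).choose 3 := Nat.mul_div_cancel_left _ (by norm_num)
  refine ⟨hP, hTle, ?_⟩
  intro hWeq
  have h2 : (∑ u : Fin n, ∑ v : Fin n, T.dist u v) / 2 = (n + 1).choose 3 := by
    rw [← hWeq, wiener] at hP
    exact hP.symm ▸ hP
  have hge : 2 * (n + 1).choose 3 ≤ ∑ u : Fin n, ∑ v : Fin n, T.dist u v := by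
    have := Nat.div_mul_le_self (∑ u : Fin n, ∑ v : Fin n, T.dist u v) 2
    omega
  have heq : ∑ u : Fin n, ∑ v : Fin n, T.dist u v = 2 * (n + 1).choose 3 := le_antisymm hM1 hge
  exact Part2.M2 n hn T hT (Fintype.card_fin n) heq
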